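/- Let σ > 1. There exists a constant c′ ≥ 1, depending only on σ, with the following property: for every q > 0, every K ≥ 0 and every α with 1/2 ≤ α < 1, setting s_j = α + (1−α)/(j+1) and a_j = s_j/(s_j − s_{j+1}) for j ≥ 0, the infinite product Π_{j=0}^{∞} (K · a_j · σ^j · q + 1)^{2/(σ^j q)} converges and is at most ((c′·(K q + 1))/(1−α))^{2σ/((σ−1) q)}. -/

import Mathlib

open Real

/-- The estimate of the product of iteration constants in case (a) of Lemma 2:
the constant `c'` depends only on `σ`. -/
theorem product_estimate_neg (σ : ℝ) (hσ : 1 < σ) :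
    ∃ c' : ℝ, 1 ≤ c' ∧
      ∀ q K α : ℝ, 0 < q → 0 ≤ K → 1/2 ≤ α → α < 1 →
      ∀ s a : ℕ → ℝ,
        (∀ j : ℕ, s j = α + (1 - α) / ((j : ℝ) + 1)) →
        (∀ j : ℕ, a j = s j / (s j - s (j + 1))) →
        Multipliable (fun j : ℕ => (K * a j * σ ^ j * q + 1) ^ (2 / (σ ^ j * q))) ∧
        (∏' j : ℕ, (K * a j * σ ^ j * q + 1) ^ (2 / (σ ^ j * q)))
          ≤ (c' * (K * q + 1) / (1 - α)) ^ (2 * σ / ((σ - 1) * q)) := by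
  have hσ0 : (0:ℝ) < σ := by linarith
  have hr0 : (0:ℝ) ≤ 1/σ := by positivity
  have hr1 : 1/σ < 1 := by rw [div_lt_one hσ0]; linarith
  have hlogσ : 0 ≤ Real.log σ := Real.log_nonneg hσ.le
  -- the fixed auxiliary series
  set v : ℕ → ℝ := fun j => 2*((j:ℝ)+2) + (j:ℝ)*Real.log σ with hv
  set u : ℕ → ℝ := fun j => v j * (1/σ)^j with hudef
  have hv_nonneg : ∀ j, 0 ≤ v j := by
    intro j
    have : (0:ℝ) ≤ (j:ℝ) := Nat.cast_nonneg j
    simp only [hv]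
    nlinarith
  have hu_nonneg : ∀ j, 0 ≤ u j := fun j => mul_nonneg (hv_nonneg j) (by positivity)
  have S1 : Summable (fun j : ℕ => (j:ℝ) * (1/σ)^j) := by
    have := summable_pow_mul_geometric_of_norm_lt_one (R := ℝ) 1
      (r := 1/σ) (by rwa [Real.norm_eq_abs, abs_of_nonneg hr0])
    simpa using this
  have Sg : Summable (fun j : ℕ => ((1:ℝ)/σ)^j) := summable_geometric_of_lt_one hr0 hr1
  have hu_sum : Summable u := by
    have h := ((S1.mul_left 2).add (Sg.mul_left 4)).add (S1.mul_left (Real.log σ))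
    refine h.congr fun j => ?_
    simp only [hudef, hv]; ring
  set U := ∑' j, u j with hU
  have hU0 : 0 ≤ U := tsum_nonneg hu_nonneg
  refine ⟨Real.exp (U*(σ-1)/σ), Real.one_le_exp (div_nonneg (mul_nonneg hU0 (by linarith)) hσ0.le), ?_⟩
  intro q K α hq hK hα hα1 s a hs ha
  have h1α : 0 < 1 - α := by linarith
  have hσj : ∀ j:ℕ, (0:ℝ) < σ ^ j := fun j => pow_pos hσ0 j
  have hσj1 : ∀ j:ℕ, (1:ℝ) ≤ σ ^ j := fun j => one_le_pow₀ hσ.le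
  -- bounds on s
  have hs_lb : ∀ j, (1:ℝ)/2 ≤ s j := by
    intro j; rw [hs]
    have : (0:ℝ) ≤ (1-α)/((j:ℝ)+1) := by positivity
    linarith
  have hs_ub : ∀ j, s j ≤ 1 := by
    intro j; rw [hs]
    have h1 : (1:ℝ) ≤ (j:ℝ)+1 := by
      have : (0:ℝ) ≤ (j:ℝ) := Nat.cast_nonneg j; linarith
    have : (1-α)/((j:ℝ)+1) ≤ (1-α) := by
      rw [div_le_iff₀ (by linarith)]; nlinarith
    linarith
  have hd : ∀ j, s j - s (j+1) = (1-α)/(((j:ℝ)+1)*((j:ℝ)+2)) := by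
    intro j; rw [hs, hs]; push_cast
    have h1 : ((j:ℝ)+1) ≠ 0 := by positivity
    have h2 : ((j:ℝ)+2) ≠ 0 := by positivity
    field_simp
    ring
  have hd_pos : ∀ j, 0 < s j - s (j+1) := by
    intro j; rw [hd]; positivity
  have ha1 : ∀ j, 1 ≤ a j := by
    intro j; rw [ha, le_div_iff₀ (hd_pos j)]
    have := hs_lb (j+1); linarith
  have ha_pos : ∀ j, 0 < a j := fun j => lt_of_lt_of_le one_pos (ha1 j)
  have ha_ub : ∀ j, a j ≤ ((j:ℝ)+1)*((j:ℝ)+2)/(1-α) := by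
    intro j
    rw [ha, hd, div_div_eq_mul_div]
    have hP : (0:ℝ) < ((j:ℝ)+1)*((j:ℝ)+2) := by positivity
    have hsj := hs_ub j
    exact (div_le_div_iff_of_pos_right h1α).mpr (by nlinarith)
  -- the base and exponent
  set b : ℕ → ℝ := fun j => K * a j * σ ^ j * q + 1 with hb
  have hb1 : ∀ j, 1 ≤ b j := by
    intro j
    have : 0 ≤ K * a j * σ ^ j * q :=
      mul_nonneg (mul_nonneg (mul_nonneg hK (ha_pos j).le) (hσj j).le) hq.le
    simp only [hb]; linarith
  have hb0 : ∀ j, 0 < b j := fun j => lt_of_lt_of_le one_pos (hb1 j)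
  set g : ℕ → ℝ := fun j => Real.log (b j) * (2 / (σ ^ j * q)) with hg
  have h_eq : ∀ j, (K * a j * σ ^ j * q + 1) ^ (2 / (σ ^ j * q)) = Real.exp (g j) := by
    intro j
    rw [Real.rpow_def_of_pos (hb0 j)]
  set L : ℝ := Real.log (K*q+1) - Real.log (1-α) with hL
  have hL0 : 0 ≤ L := by
    have h1 : 0 ≤ Real.log (K*q+1) := Real.log_nonneg (by nlinarith)
    have h2 : Real.log (1-α) ≤ 0 := Real.log_nonpos h1α.le (by linarith)
    simp only [hL]; linarith
  have hlog : ∀ j, Real.log (b j) ≤ L + v j := by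
    intro j
    have h1 : 1 ≤ a j * σ ^ j :=
      one_le_mul_of_one_le_of_one_le (ha1 j) (hσj1 j)
    have hb_le : b j ≤ (K*q+1) * (a j * σ ^ j) := by
      simp only [hb]; nlinarith [mul_nonneg (mul_nonneg hK hq.le) (le_trans zero_le_one h1)]
    have h2 : Real.log (b j) ≤ Real.log ((K*q+1) * (a j * σ ^ j)) :=
      Real.log_le_log (hb0 j) hb_le
    have h3 : Real.log ((K*q+1) * (a j * σ ^ j)) =
        Real.log (K*q+1) + Real.log (a j) + (j:ℝ) * Real.log σ := by
      rw [Real.log_mul (by nlinarith) (by positivity),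
        Real.log_mul (ne_of_gt (ha_pos j)) (ne_of_gt (hσj j)), Real.log_pow]
      ring
    have h4 : Real.log (a j) ≤ 2*((j:ℝ)+2) - Real.log (1-α) := by
      have hle : Real.log (a j) ≤ Real.log (((j:ℝ)+1)*((j:ℝ)+2)/(1-α)) :=
        Real.log_le_log (ha_pos j) (ha_ub j)
      have heq : Real.log (((j:ℝ)+1)*((j:ℝ)+2)/(1-α)) =
          Real.log ((j:ℝ)+1) + Real.log ((j:ℝ)+2) - Real.log (1-α) := by
        rw [Real.log_div (by positivity) (ne_of_gt h1α),
          Real.log_mul (by positivity) (by positivity)]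
      have l1 : Real.log ((j:ℝ)+1) ≤ (j:ℝ)+2 := by
        have := Real.log_le_self (x := (j:ℝ)+1) (by positivity); linarith
      have l2 : Real.log ((j:ℝ)+2) ≤ (j:ℝ)+2 := Real.log_le_self (by positivity)
      rw [heq] at hle; linarith
    simp only [hL, hv]; linarith
  -- comparison series
  set w : ℕ → ℝ := fun j => (2/q) * (L * (1/σ)^j + u j) with hw
  have hw_sum : Summable w := ((Sg.mul_left L).add hu_sum).mul_left (2/q)
  have hgw : ∀ j, g j ≤ w j := by
    intro j
    have hpos : (0:ℝ) < 2 / (σ ^ j * q) := by positivity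
    have hmul := mul_le_mul_of_nonneg_right (hlog j) hpos.le
    refine le_trans hmul (le_of_eq ?_)
    simp only [hw, hudef]
    have hinv : ((1:ℝ)/σ)^j = (σ^j)⁻¹ := by rw [one_div, inv_pow]
    rw [hinv]
    have hσjne : (σ:ℝ)^j ≠ 0 := ne_of_gt (hσj j)
    field_simp
  have hg_nonneg : ∀ j, 0 ≤ g j := by
    intro j
    have h1 : 0 ≤ Real.log (b j) := Real.log_nonneg (hb1 j)
    have hpos : (0:ℝ) ≤ 2 / (σ ^ j * q) := by positivity
    exact mul_nonneg h1 hpos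
  have hg_sum : Summable g := Summable.of_nonneg_of_le hg_nonneg hgw hw_sum
  have hprod : HasProd (fun j => Real.exp (g j)) (Real.exp (∑' j, g j)) :=
    hg_sum.hasSum.rexp
  have hfun : (fun j : ℕ => (K * a j * σ ^ j * q + 1) ^ (2 / (σ ^ j * q)))
      = fun j => Real.exp (g j) := funext h_eq
  constructor
  · rw [hfun]; exact ⟨_, hprod⟩
  · rw [hfun, hprod.tprod_eq]
    have hc0 : (0:ℝ) < Real.exp (U*(σ-1)/σ) := Real.exp_pos _
    have hKq1 : (0:ℝ) < K*q+1 := by nlinarith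
    have hB : (0:ℝ) < Real.exp (U*(σ-1)/σ) * (K*q+1) / (1-α) := by positivity
    rw [Real.rpow_def_of_pos hB, Real.exp_le_exp]
    have hlogB : Real.log (Real.exp (U*(σ-1)/σ) * (K*q+1) / (1-α))
        = U*(σ-1)/σ + L := by
      rw [Real.log_div (by positivity) (ne_of_gt h1α),
        Real.log_mul (ne_of_gt hc0) (ne_of_gt hKq1), Real.log_exp]
      simp only [hL]; ring
    rw [hlogB]
    have hsum_le : (∑' j, g j) ≤ ∑' j, w j :=
      Summable.tsum_le_tsum hgw hg_sum hw_sum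
    have htsum_w : (∑' j, w j) = (2/q) * (L * (1 - 1/σ)⁻¹ + U) := by
      simp only [hw]
      rw [tsum_mul_left, Summable.tsum_add (Sg.mul_left L) hu_sum, tsum_mul_left,
        tsum_geometric_of_lt_one hr0 hr1]
    refine le_trans hsum_le (le_of_eq ?_)
    rw [htsum_w]
    have hσ1 : σ - 1 ≠ 0 := by linarith
    have hq0 : q ≠ 0 := ne_of_gt hq
    have hσne : σ ≠ 0 := ne_of_gt hσ0
    have hinv : (1 - 1/σ)⁻¹ = σ/(σ-1) := by
      rw [eq_div_iff hσ1]; field_simp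
    rw [hinv]
    field_simp
    ring
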